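/- Assume b₀ = b₁ = 0 and A₀, A₁ ≥ 1 with A₀ ≠ A₁, and let μ be the ghost measure of f. Then for every integer t, ∫ e^{−2πitx} dμ(x) = ∏_{n=1}^∞ (A₀ + A₁·e^{−2πit/2^n}) / (A₀ + A₁), where the infinite product converges. -/

import Mathlib

open MeasureTheory Filter Topology

/-- The `N`-th approximant to the ghost measure of `f`: the normalised Dirac comb built from
the values of `f` on the fundamental region `[2^N, 2^(N+1))`. -/
noncomputable def ghostApprox (f : ℕ → ℕ) (N : ℕ) : Measure ℝ :=
  (∑ n ∈ Finset.range (2 ^ N), (f (2 ^ N + n) : ENNReal))⁻¹ •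
    ∑ n ∈ Finset.range (2 ^ N), (f (2 ^ N + n) : ENNReal) • Measure.dirac ((n : ℝ) / 2 ^ N)

/-- Weak (vague) convergence of a sequence of finite measures on `ℝ`. -/
def WeakLimit (μs : ℕ → Measure ℝ) (μ : Measure ℝ) : Prop :=
  ∀ g : BoundedContinuousFunction ℝ ℝ,
    Tendsto (fun N => ∫ x, g x ∂(μs N)) atTop (𝓝 (∫ x, g x ∂μ))

private lemma sum_range_two_mul {M : Type*} [AddCommMonoid M] (h : ℕ → M) (m : ℕ) :
    ∑ n ∈ Finset.range (2 * m), h n = ∑ k ∈ Finset.range m, (h (2 * k) + h (2 * k + 1)) := by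
  induction m with
  | zero => simp
  | succ m ih =>
    have h2 : 2 * (m + 1) = (2 * m + 1) + 1 := by ring
    rw [h2, Finset.sum_range_succ, Finset.sum_range_succ, ih, Finset.sum_range_succ]
    abel

private lemma ghost_sum (A₀ A₁ : ℕ) (f : ℕ → ℕ)
    (heven : ∀ n, 1 ≤ n → f (2 * n) = A₀ * f n)
    (hodd : ∀ n, 1 ≤ n → f (2 * n + 1) = A₁ * f n)
    (c : ℂ) (N : ℕ) :
    ∑ n ∈ Finset.range (2 ^ N), (f (2 ^ N + n) : ℂ) * Complex.exp (c / 2 ^ N) ^ n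
      = (f 1 : ℂ) *
          ∏ j ∈ Finset.range N, ((A₀ : ℂ) + (A₁ : ℂ) * Complex.exp (c / 2 ^ (j + 1))) := by
  induction N with
  | zero => simp
  | succ N ih =>
    have hw2 : Complex.exp (c / 2 ^ (N + 1)) ^ 2 = Complex.exp (c / 2 ^ N) := by
      rw [← Complex.exp_nat_mul]
      congr 1
      have h2 : (2 : ℂ) ^ (N + 1) ≠ 0 := pow_ne_zero _ two_ne_zero
      have h2' : (2 : ℂ) ^ N ≠ 0 := pow_ne_zero _ two_ne_zero
      field_simp
      ring
    have hsplit : (2 : ℕ) ^ (N + 1) = 2 * 2 ^ N := by ring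
    rw [hsplit, sum_range_two_mul]
    have hterm : ∀ k ∈ Finset.range (2 ^ N),
        ((f (2 * 2 ^ N + 2 * k) : ℂ) * Complex.exp (c / 2 ^ (N + 1)) ^ (2 * k) +
          (f (2 * 2 ^ N + (2 * k + 1)) : ℂ) * Complex.exp (c / 2 ^ (N + 1)) ^ (2 * k + 1))
          = ((A₀ : ℂ) + (A₁ : ℂ) * Complex.exp (c / 2 ^ (N + 1))) *
              ((f (2 ^ N + k) : ℂ) * (Complex.exp (c / 2 ^ (N + 1)) ^ 2) ^ k) := by
      intro k hk
      have h1 : 2 * 2 ^ N + 2 * k = 2 * (2 ^ N + k) := by ring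
      have h2 : 2 * 2 ^ N + (2 * k + 1) = 2 * (2 ^ N + k) + 1 := by ring
      have hpos : 1 ≤ 2 ^ N + k := le_trans Nat.one_le_two_pow (Nat.le_add_right _ _)
      rw [h1, h2, heven _ hpos, hodd _ hpos]
      push_cast
      ring
    rw [Finset.sum_congr rfl hterm, ← Finset.mul_sum, hw2, ih, Finset.prod_range_succ]
    ring

private lemma integrable_ghost_piece {g : ℝ → ℂ} (hg : Measurable g) (m : ℕ) (x : ℝ) :
    Integrable g ((m : ENNReal) • Measure.dirac x) := by
  refine Integrable.smul_measure ?_ (ENNReal.natCast_ne_top m)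
  refine ⟨hg.aestronglyMeasurable, ?_⟩
  simp only [HasFiniteIntegral, lintegral_dirac]
  exact ENNReal.coe_lt_top

private lemma integral_ghostApprox (f : ℕ → ℕ) (N : ℕ) {g : ℝ → ℂ} (hg : Measurable g) :
    ∫ x, g x ∂(ghostApprox f N)
      = ((∑ n ∈ Finset.range (2 ^ N), (f (2 ^ N + n) : ENNReal))⁻¹).toReal •
          ∑ n ∈ Finset.range (2 ^ N), (f (2 ^ N + n) : ℝ) • g ((n : ℝ) / 2 ^ N) := by
  rw [ghostApprox, integral_smul_measure,
    integral_finset_sum_measure (fun n _ => integrable_ghost_piece hg _ _)]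
  congr 1
  refine Finset.sum_congr rfl fun n _ => ?_
  rw [integral_smul_measure, integral_dirac]
  simp

private noncomputable def cosBCF (a : ℝ) : BoundedContinuousFunction ℝ ℝ :=
  BoundedContinuousFunction.ofNormedAddCommGroup (fun x => Real.cos (a * x))
    (Real.continuous_cos.comp (continuous_const.mul continuous_id)) 1
    (fun x => by rw [Real.norm_eq_abs]; exact Real.abs_cos_le_one _)

private noncomputable def sinBCF (a : ℝ) : BoundedContinuousFunction ℝ ℝ :=
  BoundedContinuousFunction.ofNormedAddCommGroup (fun x => Real.sin (a * x))
    (Real.continuous_sin.comp (continuous_const.mul continuous_id)) 1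
    (fun x => by rw [Real.norm_eq_abs]; exact Real.abs_sin_le_one _)

private lemma integral_exp_eq (ν : Measure ℝ) [IsFiniteMeasure ν] (c : ℂ) (a : ℝ)
    (h : ∀ x : ℝ, c * x = ((a * x : ℝ) : ℂ) * Complex.I) :
    ∫ x, Complex.exp (c * x) ∂ν
      = ((∫ x, Real.cos (a * x) ∂ν : ℝ) : ℂ) +
          ((∫ x, Real.sin (a * x) ∂ν : ℝ) : ℂ) * Complex.I := by
  have h1 : Integrable (fun x => Real.cos (a * x)) ν := by
    have := (cosBCF a).integrable ν
    simpa [cosBCF] using this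
  have h2 : Integrable (fun x => Real.sin (a * x)) ν := by
    have := (sinBCF a).integrable ν
    simpa [sinBCF] using this
  calc ∫ x, Complex.exp (c * x) ∂ν
      = ∫ x, (((Real.cos (a * x) : ℝ) : ℂ) + ((Real.sin (a * x) : ℝ) : ℂ) * Complex.I) ∂ν := by
        refine integral_congr_ae (Filter.Eventually.of_forall fun x => ?_)
        show Complex.exp (c * x)
            = ((Real.cos (a * x) : ℝ) : ℂ) + ((Real.sin (a * x) : ℝ) : ℂ) * Complex.I
        rw [h x, Complex.exp_mul_I, Complex.ofReal_cos, Complex.ofReal_sin]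
    _ = (∫ x, ((Real.cos (a * x) : ℝ) : ℂ) ∂ν) +
          ∫ x, ((Real.sin (a * x) : ℝ) : ℂ) * Complex.I ∂ν :=
        integral_add h1.ofReal (h2.ofReal.mul_const _)
    _ = _ := by
        have e1 : ∫ x, ((Real.cos (a * x) : ℝ) : ℂ) ∂ν
            = ((∫ x, Real.cos (a * x) ∂ν : ℝ) : ℂ) := integral_ofReal
        have e2 : ∫ x, ((Real.sin (a * x) : ℝ) : ℂ) ∂ν
            = ((∫ x, Real.sin (a * x) ∂ν : ℝ) : ℂ) := integral_ofReal
        rw [integral_mul_const, e1, e2]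

theorem stmt_16 (A₀ A₁ b₀ b₁ : ℕ) (hnz : ¬(A₀ = 0 ∧ A₁ = 0 ∧ b₀ = 0 ∧ b₁ = 0))
    (f : ℕ → ℕ) (hf1 : 1 ≤ f 1)
    (heven : ∀ n, 1 ≤ n → f (2 * n) = A₀ * f n + b₀)
    (hodd : ∀ n, 1 ≤ n → f (2 * n + 1) = A₁ * f n + b₁)
    (hb₀ : b₀ = 0) (hb₁ : b₁ = 0) (hAne : A₀ ≠ A₁) (hA0 : 1 ≤ A₀) (hA1 : 1 ≤ A₁)
    (μ : Measure ℝ) (hμ : IsProbabilityMeasure μ)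
    (hlim : WeakLimit (ghostApprox f) μ) :
    ∀ t : ℤ,
      Multipliable (fun n : ℕ =>
        ((A₀ : ℂ) + (A₁ : ℂ) *
            Complex.exp (-2 * (Real.pi : ℂ) * Complex.I * (t : ℂ) / 2 ^ (n + 1))) /
          ((A₀ : ℂ) + (A₁ : ℂ))) ∧
      ∫ x, Complex.exp (-2 * (Real.pi : ℂ) * Complex.I * (t : ℂ) * (x : ℂ)) ∂μ =
        ∏' n : ℕ,
          ((A₀ : ℂ) + (A₁ : ℂ) *
              Complex.exp (-2 * (Real.pi : ℂ) * Complex.I * (t : ℂ) / 2 ^ (n + 1))) /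
            ((A₀ : ℂ) + (A₁ : ℂ)) := by
  subst hb₀ hb₁
  haveI := hμ
  intro t
  set c : ℂ := -2 * (Real.pi : ℂ) * Complex.I * (t : ℂ) with hc
  set g : ℕ → ℂ := fun n =>
    ((A₀ : ℂ) + (A₁ : ℂ) * Complex.exp (c / 2 ^ (n + 1))) / ((A₀ : ℂ) + (A₁ : ℂ)) with hgdef
  have heven' : ∀ n, 1 ≤ n → f (2 * n) = A₀ * f n := fun n hn => by simpa using heven n hn
  have hodd' : ∀ n, 1 ≤ n → f (2 * n + 1) = A₁ * f n := fun n hn => by simpa using hodd n hn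
  -- basic nonvanishing facts
  have hAsum : (A₀ : ℂ) + (A₁ : ℂ) = ((A₀ + A₁ : ℕ) : ℂ) := by push_cast; ring
  have hAne0 : (A₀ : ℂ) + (A₁ : ℂ) ≠ 0 := by
    rw [hAsum]
    exact Nat.cast_ne_zero.mpr (by omega)
  have hf1ne : (f 1 : ℂ) ≠ 0 := Nat.cast_ne_zero.mpr (by omega)
  -- the real phase
  set a : ℝ := -2 * Real.pi * (t : ℝ) with ha
  have hca : ∀ x : ℝ, c * x = ((a * x : ℝ) : ℂ) * Complex.I := by
    intro x
    rw [hc, ha]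
    push_cast
    ring
  -- modulus-one fact
  have habs : ∀ n : ℕ, ‖Complex.exp (c / 2 ^ (n + 1))‖ = 1 := by
    intro n
    have : c / 2 ^ (n + 1) = ((a / 2 ^ (n + 1) : ℝ) : ℂ) * Complex.I := by
      rw [hc, ha]; push_cast; ring
    rw [this]
    exact Complex.norm_exp_ofReal_mul_I _
  have hnum_ne : ∀ n : ℕ, (A₀ : ℂ) + (A₁ : ℂ) * Complex.exp (c / 2 ^ (n + 1)) ≠ 0 := by
    intro n h
    have h1 : (A₁ : ℂ) * Complex.exp (c / 2 ^ (n + 1)) = -(A₀ : ℂ) := by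
      linear_combination h
    have h2 := congrArg (‖·‖) h1
    rw [norm_mul, Complex.norm_natCast, habs n, mul_one, norm_neg,
      Complex.norm_natCast] at h2
    exact hAne (Nat.cast_injective h2).symm
  have hg_ne : ∀ n, g n ≠ 0 := fun n => div_ne_zero (hnum_ne n) hAne0
  -- summability of the logs
  have hu : ∀ n : ℕ, g n = 1 + (A₁ : ℂ) / ((A₀ : ℂ) + (A₁ : ℂ)) *
      (Complex.exp (c / 2 ^ (n + 1)) - 1) := by
    intro n
    rw [hgdef]
    field_simp
    ring
  have hfrac : ‖(A₁ : ℂ) / ((A₀ : ℂ) + (A₁ : ℂ))‖ ≤ 1 := by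
    rw [norm_div, hAsum, Complex.norm_natCast, Complex.norm_natCast]
    exact div_le_one_of_le₀ (by exact_mod_cast Nat.le_add_left _ _) (Nat.cast_nonneg _)
  have hev : ∀ᶠ n : ℕ in atTop, ‖c‖ * (1 / 2) ^ n ≤ 1 / 2 := by
    have h0 : Tendsto (fun n : ℕ => ‖c‖ * (1 / 2 : ℝ) ^ n) atTop (𝓝 0) := by
      have := tendsto_pow_atTop_nhds_zero_of_lt_one (by norm_num : (0:ℝ) ≤ 1/2)
        (by norm_num : (1/2:ℝ) < 1)
      simpa using this.const_mul ‖c‖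
    exact h0.eventually_le_const (by norm_num)
  have hlog_sum : Summable (fun n => Complex.log (g n)) := by
    refine Summable.of_norm_bounded_eventually_nat (g := fun n => 3 / 2 * (‖c‖ * (1 / 2) ^ n))
      (((summable_geometric_of_lt_one (by norm_num) (by norm_num)).mul_left ‖c‖).mul_left _) ?_
    filter_upwards [hev] with n hn
    set w : ℂ := c / 2 ^ (n + 1) with hwdef
    have hwnorm : ‖w‖ = ‖c‖ * (1 / 2) ^ n / 2 := by
      rw [hwdef, norm_div, norm_pow, Complex.norm_ofNat, one_div, inv_pow, pow_succ]
      ring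
    have hp2 : (0:ℝ) ≤ (1 / 2) ^ n := by positivity
    have hw1 : ‖w‖ ≤ 1 := by rw [hwnorm]; nlinarith [norm_nonneg c, hp2]
    have hexp1 : ‖Complex.exp w - 1‖ ≤ 2 * ‖w‖ := by
      exact Complex.norm_exp_sub_one_le (x := w) hw1
    set u : ℂ := (A₁ : ℂ) / ((A₀ : ℂ) + (A₁ : ℂ)) * (Complex.exp w - 1) with hudef
    have hunorm : ‖u‖ ≤ ‖c‖ * (1 / 2) ^ n := by
      rw [hudef, norm_mul]
      calc ‖(A₁ : ℂ) / ((A₀ : ℂ) + (A₁ : ℂ))‖ * ‖Complex.exp w - 1‖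
          ≤ 1 * (2 * ‖w‖) := by
            exact mul_le_mul hfrac hexp1 (norm_nonneg _) zero_le_one
        _ = ‖c‖ * (1 / 2) ^ n := by rw [hwnorm]; ring
    have huhalf : ‖u‖ ≤ 1 / 2 := le_trans hunorm hn
    have : Complex.log (g n) = Complex.log (1 + u) := by rw [hu n]
    rw [this]
    calc ‖Complex.log (1 + u)‖ ≤ 3 / 2 * ‖u‖ :=
          Complex.norm_log_one_add_half_le_self huhalf
      _ ≤ 3 / 2 * (‖c‖ * (1 / 2) ^ n) := by nlinarith [hunorm]
  -- multipliability
  have hhp : HasProd g (Complex.exp (∑' n, Complex.log (g n))) := by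
    have h1 := hlog_sum.hasSum.cexp
    have h2 : (Complex.exp ∘ fun n => Complex.log (g n)) = g :=
      funext fun n => Complex.exp_log (hg_ne n)
    rwa [h2] at h1
  have hmult : Multipliable g := ⟨_, hhp⟩
  refine ⟨hmult, ?_⟩
  have hprodlim : Tendsto (fun N => ∏ j ∈ Finset.range N, g j) atTop (𝓝 (∏' n, g n)) :=
    hmult.hasProd.tendsto_prod_nat
  -- value of the N-th Fourier coefficient
  have hgmeas : Measurable fun x : ℝ => Complex.exp (c * x) :=
    (Complex.continuous_exp.comp (continuous_const.mul Complex.continuous_ofReal)).measurable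
  have hFN : ∀ N : ℕ, ((∑ n ∈ Finset.range (2 ^ N), f (2 ^ N + n) : ℕ) : ℂ)
      = (f 1 : ℂ) * ((A₀ : ℂ) + (A₁ : ℂ)) ^ N := by
    intro N
    have h0 := ghost_sum A₀ A₁ f heven' hodd' 0 N
    simp only [zero_div, Complex.exp_zero, one_pow, mul_one] at h0
    rw [Nat.cast_sum]
    rw [h0, Finset.prod_const, Finset.card_range]
  have hFN0 : ∀ N : ℕ, (∑ n ∈ Finset.range (2 ^ N), f (2 ^ N + n) : ℕ) ≠ 0 := by
    intro N h
    have := hFN N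
    rw [h] at this
    exact (mul_ne_zero hf1ne (pow_ne_zero _ hAne0)) (by exact_mod_cast this.symm)
  have hSigma : ∀ N : ℕ, (∑ n ∈ Finset.range (2 ^ N), (f (2 ^ N + n) : ENNReal))
      = ((∑ n ∈ Finset.range (2 ^ N), f (2 ^ N + n) : ℕ) : ENNReal) := by
    intro N; push_cast; rfl
  haveI hprob : ∀ N, IsProbabilityMeasure (ghostApprox f N) := by
    intro N
    constructor
    rw [ghostApprox, Measure.smul_apply, Measure.coe_finset_sum, Finset.sum_apply]
    have : ∑ n ∈ Finset.range (2 ^ N),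
        ((f (2 ^ N + n) : ENNReal) • Measure.dirac ((n : ℝ) / 2 ^ N)) Set.univ
        = ∑ n ∈ Finset.range (2 ^ N), (f (2 ^ N + n) : ENNReal) := by
      refine Finset.sum_congr rfl fun n _ => ?_
      rw [Measure.smul_apply, measure_univ, smul_eq_mul, mul_one]
    rw [this, smul_eq_mul]
    rw [hSigma N]
    exact ENNReal.inv_mul_cancel (by exact_mod_cast hFN0 N) (ENNReal.natCast_ne_top _)
  have hμN : ∀ N : ℕ, ∫ x, Complex.exp (c * x) ∂(ghostApprox f N)
      = ∏ j ∈ Finset.range N, g j := by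
    intro N
    rw [integral_ghostApprox f N hgmeas]
    have hexp : ∀ n : ℕ, Complex.exp (c * ((n : ℝ) / 2 ^ N : ℝ))
        = Complex.exp (c / 2 ^ N) ^ n := by
      intro n
      rw [← Complex.exp_nat_mul]
      congr 1
      have h2' : (2 : ℂ) ^ N ≠ 0 := pow_ne_zero _ two_ne_zero
      push_cast
      field_simp
    have hsum : ∑ n ∈ Finset.range (2 ^ N),
        (f (2 ^ N + n) : ℝ) • Complex.exp (c * ((n : ℝ) / 2 ^ N : ℝ))
        = (f 1 : ℂ) * ∏ j ∈ Finset.range N,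
            ((A₀ : ℂ) + (A₁ : ℂ) * Complex.exp (c / 2 ^ (j + 1))) := by
      rw [← ghost_sum A₀ A₁ f heven' hodd' c N]
      refine Finset.sum_congr rfl fun n _ => ?_
      rw [hexp n, Complex.real_smul]
      push_cast
      ring
    rw [hsum, hSigma N, ENNReal.toReal_inv, ENNReal.toReal_natCast, Complex.real_smul,
      Complex.ofReal_inv, Complex.ofReal_natCast, hFN N]
    simp only [hgdef]
    rw [Finset.prod_div_distrib, Finset.prod_const, Finset.card_range]
    field_simp
  -- pass to the weak limit
  have hcos : Tendsto (fun N => ∫ x, Real.cos (a * x) ∂(ghostApprox f N)) atTop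
      (𝓝 (∫ x, Real.cos (a * x) ∂μ)) := by
    have := hlim (cosBCF a)
    simpa [cosBCF] using this
  have hsin : Tendsto (fun N => ∫ x, Real.sin (a * x) ∂(ghostApprox f N)) atTop
      (𝓝 (∫ x, Real.sin (a * x) ∂μ)) := by
    have := hlim (sinBCF a)
    simpa [sinBCF] using this
  have hexp_tend : Tendsto (fun N => ∏ j ∈ Finset.range N, g j) atTop
      (𝓝 (∫ x, Complex.exp (c * x) ∂μ)) := by
    have e1 : (fun N => ∏ j ∈ Finset.range N, g j) = fun N =>
        ((∫ x, Real.cos (a * x) ∂(ghostApprox f N) : ℝ) : ℂ) +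
          ((∫ x, Real.sin (a * x) ∂(ghostApprox f N) : ℝ) : ℂ) * Complex.I := by
      funext N
      rw [← hμN N, integral_exp_eq _ c a hca]
    rw [e1, integral_exp_eq μ c a hca]
    exact ((Complex.continuous_ofReal.tendsto _).comp hcos).add
      (((Complex.continuous_ofReal.tendsto _).comp hsin).mul_const _)
  exact tendsto_nhds_unique hexp_tend hprodlim
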